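/- Let Q be an NQPR in dimension d ≥ 2, and let N⁺ = ((d−1)√(d+1) − 1)/d. Then the set of density matrices ρ (d×d complex positive semidefinite matrices with trace 1) for which there exists an index j with Re tr(ρ Q_j) ≤ −N⁺ is finite and has at most d² elements. -/

import Mathlib

open scoped ComplexOrder

section Aux
open scoped Matrix

variable {d : ℕ}

/-- trace of a Hermitian matrix is the sum of its eigenvalues. -/
lemma aux_trace_eq_sum_eigs (A : Matrix (Fin d) (Fin d) ℂ) (hA : A.IsHermitian) :
    A.trace = ∑ i, (hA.eigenvalues i : ℂ) := by
  conv_lhs => rw [hA.spectral_theorem, Unitary.conjStarAlgAut_apply]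
  rw [Matrix.trace_mul_comm, ← Matrix.mul_assoc, Unitary.star_mul_self_of_mem (SetLike.coe_mem _), Matrix.one_mul,
    Matrix.trace_diagonal]
  rfl

/-- trace of the square of a Hermitian matrix is the sum of squared eigenvalues. -/
lemma aux_trace_sq_eq_sum_sq_eigs (A : Matrix (Fin d) (Fin d) ℂ) (hA : A.IsHermitian) :
    (A * A).trace = ∑ i, (hA.eigenvalues i : ℂ) ^ 2 := by
  set U := (hA.eigenvectorUnitary : Matrix (Fin d) (Fin d) ℂ) with hU
  set D := Matrix.diagonal ((RCLike.ofReal : ℝ → ℂ) ∘ hA.eigenvalues) with hD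
  have h1 : star U * U = 1 := Unitary.coe_star_mul_self _
  have key : A * A = U * (D * D) * star U := by
    conv_lhs => rw [hA.spectral_theorem, Unitary.conjStarAlgAut_apply]
    simp only [Matrix.mul_assoc, ← hU, ← hD]
    rw [← Matrix.mul_assoc (star U) U, h1, Matrix.one_mul]
  rw [key, Matrix.trace_mul_comm, ← Matrix.mul_assoc, h1, Matrix.one_mul, hD,
    Matrix.diagonal_mul_diagonal, Matrix.trace_diagonal]
  simp [sq]

/-- arithmetic core of the minimal-eigenvalue bound. -/
lemma aux_arith (dr s fk : ℝ) (hd' : 2 ≤ dr) (hs : s ^ 2 = dr + 1) (hs0 : 0 ≤ s)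
    (hcs : (1 - fk) ^ 2 ≤ (dr - 1) * (dr - fk ^ 2)) (hlt : dr * fk < 1 - (dr - 1) * s) :
    False := by
  have h1 : dr * fk - 1 < -((dr - 1) * s) := by linarith
  have h2 : (0:ℝ) ≤ (dr - 1) * s := by nlinarith
  have h3 : ((dr - 1) * s) ^ 2 < (dr * fk - 1) ^ 2 := by nlinarith
  have h4 : ((dr - 1) * s) ^ 2 = (dr - 1) ^ 2 * (dr + 1) := by rw [mul_pow, hs]
  nlinarith [mul_le_mul_of_nonneg_left hcs (by linarith : (0:ℝ) ≤ dr)]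

/-- eigenvalue lower bound from the trace conditions. -/
lemma aux_eig_bound (hd : 2 ≤ d) (f : Fin d → ℝ) (h1 : ∑ i, f i = 1)
    (h2 : ∑ i, f i ^ 2 = d) (k : Fin d) :
    (1 - ((d:ℝ) - 1) * Real.sqrt (d + 1)) / d ≤ f k := by
  have hcs := sq_sum_le_card_mul_sum_sq (s := Finset.univ.erase k) (f := f)
  rw [Finset.sum_erase_eq_sub (Finset.mem_univ k), Finset.sum_erase_eq_sub (Finset.mem_univ k),
    Finset.card_erase_of_mem (Finset.mem_univ k), Finset.card_univ, Fintype.card_fin, h1, h2]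
    at hcs
  have hs : Real.sqrt (d + 1) ^ 2 = d + 1 := Real.sq_sqrt (by positivity)
  have hd' : (2:ℝ) ≤ d := by exact_mod_cast hd
  by_contra hlt
  push_neg at hlt
  have hcast : ((d - 1 : ℕ) : ℝ) = (d:ℝ) - 1 := by
    have : (1:ℕ) ≤ d := by omega
    push_cast [this]; ring
  rw [hcast] at hcs
  rw [lt_div_iff₀ (by linarith : (0:ℝ) < d)] at hlt
  exact aux_arith d (Real.sqrt (d+1)) (f k) hd' hs (Real.sqrt_nonneg _) hcs (by linarith)

/-- a matrix whose `Mᴴ * M` has trace with nonpositive real part is zero. -/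
lemma aux_zero_of_trace_nonpos (M : Matrix (Fin d) (Fin d) ℂ)
    (h : ((Mᴴ * M).trace).re ≤ 0) : M = 0 := by
  have key : ((Mᴴ * M).trace).re = ∑ j, ∑ i, Complex.normSq (M i j) := by
    simp only [Matrix.trace, Matrix.diag, Matrix.mul_apply, Matrix.conjTranspose_apply,
      Complex.re_sum]
    congr 1; ext j; congr 1; ext i
    rw [Complex.star_def, ← Complex.normSq_eq_conj_mul_self]
    simp
  rw [key] at h
  have h0 : ∑ j, ∑ i, Complex.normSq (M i j) = 0 :=
    le_antisymm h (Finset.sum_nonneg fun j _ =>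
      Finset.sum_nonneg fun i _ => Complex.normSq_nonneg _)
  ext i j
  have hj := (Finset.sum_eq_zero_iff_of_nonneg (fun j _ =>
    Finset.sum_nonneg fun i _ => Complex.normSq_nonneg _)).mp h0 j (Finset.mem_univ j)
  have hij := (Finset.sum_eq_zero_iff_of_nonneg (fun i _ => Complex.normSq_nonneg _)).mp hj i
    (Finset.mem_univ i)
  simpa using Complex.normSq_eq_zero.mp hij

/-- abstract form of the zero-product lemma. -/
lemma aux_mul_eq_zero' {S T : Matrix (Fin d) (Fin d) ℂ} (hS : Sᴴ = S) (hT : Tᴴ = T)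
    (h : ((S * S * (T * T)).trace).re ≤ 0) : S * S * (T * T) = 0 := by
  have hconj : (T * S)ᴴ * (T * S) = S * (T * (T * S)) := by
    rw [Matrix.conjTranspose_mul, hS, hT, Matrix.mul_assoc]
  have htr2 : ((T * S)ᴴ * (T * S)).trace = (S * S * (T * T)).trace := by
    rw [hconj, Matrix.trace_mul_comm S (T * (T * S)),
      Matrix.trace_mul_comm (S * S) (T * T)]
    congr 1
    simp only [Matrix.mul_assoc]
  have hTS : T * S = 0 := aux_zero_of_trace_nonpos _ (by rw [htr2]; exact h)
  have hST : S * T = 0 := by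
    have := congrArg Matrix.conjTranspose hTS
    rwa [Matrix.conjTranspose_mul, hS, hT, Matrix.conjTranspose_zero] at this
  rw [show S * S * (T * T) = S * (S * T) * T by simp only [Matrix.mul_assoc], hST]
  simp

open scoped MatrixOrder in
/-- two PSD matrices whose product has trace with nonpositive real part have zero product. -/
lemma aux_mul_eq_zero {P B : Matrix (Fin d) (Fin d) ℂ} (hP : P.PosSemidef) (hB : B.PosSemidef)
    (h : ((P * B).trace).re ≤ 0) : P * B = 0 := by
  have hP2 : CFC.sqrt P * CFC.sqrt P = P := CFC.sqrt_mul_sqrt_self P hP.nonneg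
  have hB2 : CFC.sqrt B * CFC.sqrt B = B := CFC.sqrt_mul_sqrt_self B hB.nonneg
  have hmain := aux_mul_eq_zero' (Matrix.nonneg_iff_posSemidef.mp (CFC.sqrt_nonneg P)).1
    (Matrix.nonneg_iff_posSemidef.mp (CFC.sqrt_nonneg B)).1
    (S := CFC.sqrt P) (T := CFC.sqrt B) ?_
  · rw [← hP2, ← hB2]; exact hmain
  · rw [hP2, hB2]; exact h

lemma aux_shift_psd (A : Matrix (Fin d) (Fin d) ℂ) (hA : A.IsHermitian) (L : ℝ)
    (h : ∀ i, L ≤ hA.eigenvalues i) : (A - (L : ℂ) • 1).PosSemidef := by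
  set U := (hA.eigenvectorUnitary : Matrix (Fin d) (Fin d) ℂ) with hU
  have hU1 : U * star U = 1 := Unitary.coe_mul_star_self _
  have key : A - (L : ℂ) • 1 =
      U * Matrix.diagonal (fun i => ((hA.eigenvalues i - L : ℝ) : ℂ)) * star U := by
    have h1 : ((L : ℂ) • 1 : Matrix (Fin d) (Fin d) ℂ) = U * ((L : ℂ) • 1) * star U := by
      rw [Matrix.mul_smul, Matrix.mul_one, Matrix.smul_mul, hU1]
    conv_lhs => rw [hA.spectral_theorem, Unitary.conjStarAlgAut_apply, h1, ← hU]
    rw [← Matrix.sub_mul, ← Matrix.mul_sub, Matrix.smul_one_eq_diagonal,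
      Matrix.diagonal_sub]
    congr 2
    ext i
    push_cast
    rfl
  rw [key, Matrix.star_eq_conjTranspose]
  exact (Matrix.posSemidef_diagonal_iff.mpr fun i =>
    Complex.zero_le_real.mpr (by linarith [h i])).mul_mul_conjTranspose_same U

lemma aux_unique (hd : 2 ≤ d) (B : Matrix (Fin d) (Fin d) ℂ) (hB : B.PosSemidef)
    (htrB : B.trace = ((((d : ℝ) - 1) * Real.sqrt (d + 1) : ℝ) : ℂ))
    (htrB2 : (B * B).trace = (((d : ℝ) ^ 2 - 1 : ℝ) : ℂ))
    (ρ₁ ρ₂ : Matrix (Fin d) (Fin d) ℂ) (h₁ : ρ₁.PosSemidef) (h₂ : ρ₂.PosSemidef)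
    (ht1 : ρ₁.trace = 1) (ht2 : ρ₂.trace = 1)
    (hz1 : ρ₁ * B = 0) (hz2 : ρ₂ * B = 0) : ρ₁ = ρ₂ := by
  classical
  set σ : ℝ := ((d : ℝ) - 1) * Real.sqrt (d + 1) with hσ
  set ev : Fin d → ℝ := hB.1.eigenvalues with hev
  -- eigenvalue sums
  have e1 : ∑ i, ev i = σ := by
    have := (aux_trace_eq_sum_eigs B hB.1).symm.trans htrB
    exact_mod_cast (by push_cast at this ⊢; exact this : ((∑ i, ev i : ℝ) : ℂ) = (σ : ℂ))
  have e2 : ∑ i, ev i ^ 2 = (d : ℝ) ^ 2 - 1 := by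
    have := (aux_trace_sq_eq_sum_sq_eigs B hB.1).symm.trans htrB2
    exact_mod_cast (by push_cast at this ⊢; exact this :
      ((∑ i, ev i ^ 2 : ℝ) : ℂ) = (((d : ℝ) ^ 2 - 1 : ℝ) : ℂ))
  have hσsq : σ ^ 2 = ((d : ℝ) - 1) * ((d : ℝ) ^ 2 - 1) := by
    have : Real.sqrt ((d : ℝ) + 1) ^ 2 = (d : ℝ) + 1 := Real.sq_sqrt (by positivity)
    rw [hσ, mul_pow, this]; ring
  have hd' : (2 : ℝ) ≤ (d : ℝ) := by exact_mod_cast hd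
  -- kernel of B
  set K := LinearMap.ker (Matrix.mulVecLin B) with hK
  have hBρ : ∀ ρ : Matrix (Fin d) (Fin d) ℂ, ρ.IsHermitian → ρ * B = 0 → B * ρ = 0 := by
    intro ρ hρ hz
    have := congrArg Matrix.conjTranspose hz
    rwa [Matrix.conjTranspose_mul, hρ.eq, hB.1.eq, Matrix.conjTranspose_zero] at this
  have hcol : ∀ (ρ : Matrix (Fin d) (Fin d) ℂ), B * ρ = 0 → ∀ j, (fun i => ρ i j) ∈ K := by
    intro ρ hz j
    rw [hK, LinearMap.mem_ker]
    funext i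
    have : B.mulVecLin (fun k => ρ k j) i = (B * ρ) i j := rfl
    rw [this, hz]
    rfl
  -- K is nontrivial
  have hρ1ne : ρ₁ ≠ 0 := by
    intro h0; rw [h0] at ht1; simp at ht1
  obtain ⟨i', j', hij'⟩ : ∃ i j, ρ₁ i j ≠ 0 := by
    by_contra hc; push_neg at hc; exact hρ1ne (by ext i j; simpa using hc i j)
  have hKne : K ≠ ⊥ := by
    intro hbot
    have := hcol ρ₁ (hBρ ρ₁ h₁.1 hz1) j'
    rw [hbot, Submodule.mem_bot] at this
    exact hij' (by have := congrFun this i'; simpa using this)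
  have hK1 : 1 ≤ Module.finrank ℂ K := by
    rcases Nat.eq_zero_or_pos (Module.finrank ℂ K) with h0 | h'
    · exact absurd (Submodule.finrank_eq_zero.mp h0) hKne
    · exact h'
  -- rank-nullity
  have hrn : Module.finrank ℂ (LinearMap.range (Matrix.mulVecLin B)) + Module.finrank ℂ K = d := by
    rw [hK]
    rw [LinearMap.finrank_range_add_finrank_ker (Matrix.mulVecLin B)]
    simp
  have hrank : B.rank = Module.finrank ℂ (LinearMap.range (Matrix.mulVecLin B)) := rfl
  -- K has dimension exactly 1
  have hK2 : Module.finrank ℂ K = 1 := by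
    by_contra hne
    have h2 : 2 ≤ Module.finrank ℂ K := by omega
    have hrle : B.rank ≤ d - 2 := by omega
    -- Cauchy-Schwarz over nonzero eigenvalues
    have hcard : B.rank = (Finset.univ.filter (fun i => ev i ≠ 0)).card := by
      rw [hB.1.rank_eq_card_non_zero_eigs, Fintype.card_subtype]
    set s := Finset.univ.filter (fun i => ev i ≠ 0) with hs
    have hsum_s : ∑ i ∈ s, ev i = σ := by rw [hs, Finset.sum_filter_ne_zero, e1]
    have hsq_le : ∑ i ∈ s, ev i ^ 2 ≤ (d : ℝ) ^ 2 - 1 := by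
      rw [← e2]
      exact Finset.sum_le_sum_of_subset_of_nonneg (Finset.filter_subset _ _)
        (fun i _ _ => sq_nonneg _)
    have hcs := sq_sum_le_card_mul_sum_sq (s := s) (f := ev)
    rw [hsum_s] at hcs
    have hcard_le : (s.card : ℝ) ≤ (d : ℝ) - 2 := by
      have : s.card ≤ d - 2 := by omega
      have h2d : (2 : ℕ) ≤ d := hd
      calc (s.card : ℝ) ≤ ((d - 2 : ℕ) : ℝ) := by exact_mod_cast this
        _ = (d : ℝ) - 2 := by push_cast [h2d]; ring
    have hpos : (0 : ℝ) < (d : ℝ) ^ 2 - 1 := by nlinarith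
    have hsqnn : (0:ℝ) ≤ ∑ i ∈ s, ev i ^ 2 := Finset.sum_nonneg fun i _ => sq_nonneg _
    have : σ ^ 2 ≤ ((d : ℝ) - 2) * ((d : ℝ) ^ 2 - 1) := by
      calc σ ^ 2 ≤ (s.card : ℝ) * ∑ i ∈ s, ev i ^ 2 := hcs
        _ ≤ ((d : ℝ) - 2) * ((d : ℝ) ^ 2 - 1) := by
            apply mul_le_mul hcard_le hsq_le hsqnn (by linarith)
    rw [hσsq] at this
    nlinarith
  -- get spanning vector
  obtain ⟨v, hv0, hvspan⟩ := (finrank_eq_one_iff' (K := ℂ) (V := K)).mp hK2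
  have hv0' : (v : Fin d → ℂ) ≠ 0 := fun hc => hv0 (Subtype.ext hc)
  obtain ⟨i₀, hi₀⟩ : ∃ i, (v : Fin d → ℂ) i ≠ 0 := by
    by_contra hc; push_neg at hc; exact hv0' (funext fun i => by simpa using hc i)
  -- columns of M := ρ₁ - ρ₂ proportional to v
  set M := ρ₁ - ρ₂ with hM
  have hMB : B * M = 0 := by
    rw [hM, Matrix.mul_sub, hBρ ρ₁ h₁.1 hz1, hBρ ρ₂ h₂.1 hz2, sub_zero]
  have hMherm : M.IsHermitian := h₁.1.sub h₂.1
  have hMcol : ∀ j, ∃ c : ℂ, ∀ i, M i j = c * (v : Fin d → ℂ) i := by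
    intro j
    obtain ⟨c, hc⟩ := hvspan ⟨fun i => M i j, hcol M hMB j⟩
    exact ⟨c, fun i => by
      have := congrFun (congrArg (Subtype.val) hc) i
      simpa using this.symm⟩
  choose c hc using hMcol
  -- use hermiticity
  set t : ℂ := (starRingEnd ℂ) (c i₀) / (v : Fin d → ℂ) i₀ with ht
  have hcj : ∀ j, c j = t * (starRingEnd ℂ) ((v : Fin d → ℂ) j) := by
    intro j
    have hsym : M i₀ j = (starRingEnd ℂ) (M j i₀) := by
      have := congrFun (congrFun hMherm.eq i₀) j
      rw [Matrix.conjTranspose_apply] at this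
      exact this.symm
    rw [hc i₀ j, hc j i₀, map_mul] at hsym
    rw [ht]
    field_simp at hsym ⊢
    linear_combination hsym
  -- trace of M is zero
  have htrM : M.trace = 0 := by rw [hM, Matrix.trace_sub, ht1, ht2, sub_self]
  have htrM' : M.trace = t * ((∑ i, Complex.normSq ((v : Fin d → ℂ) i) : ℝ) : ℂ) := by
    rw [Matrix.trace]
    push_cast
    rw [Finset.mul_sum]
    congr 1
    ext i
    rw [Matrix.diag_apply, hc i i, hcj i]
    rw [mul_assoc]
    congr 1
    rw [← Complex.normSq_eq_conj_mul_self]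
  have hnsq : (∑ i, Complex.normSq ((v : Fin d → ℂ) i) : ℝ) ≠ 0 := by
    intro hc0
    apply hi₀
    have := (Finset.sum_eq_zero_iff_of_nonneg (fun i _ => Complex.normSq_nonneg _)).mp hc0 i₀
      (Finset.mem_univ i₀)
    exact Complex.normSq_eq_zero.mp this
  have ht0 : t = 0 := by
    rw [htrM'] at htrM
    rcases mul_eq_zero.mp htrM with h | h
    · exact h
    · exact absurd (by exact_mod_cast h) hnsq
  -- conclude
  have : M = 0 := by
    ext i j
    rw [hc j i, hcj j, ht0]
    simp
  rw [hM] at this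
  exact sub_eq_zero.mp this

lemma aux_key (hd : 2 ≤ d) (A : Matrix (Fin d) (Fin d) ℂ) (hA : A.IsHermitian)
    (htrA : A.trace = 1) (htrA2 : (A * A).trace = (d : ℂ))
    (ρ : Matrix (Fin d) (Fin d) ℂ) (hρ : ρ.PosSemidef) (htρ : ρ.trace = 1)
    (hneg : ((ρ * A).trace).re ≤ -((((d : ℝ) - 1) * Real.sqrt (d + 1) - 1) / d)) :
    ρ * (A - (((1 - ((d : ℝ) - 1) * Real.sqrt (d + 1)) / d : ℝ) : ℂ) • 1) = 0 ∧
    (A - (((1 - ((d : ℝ) - 1) * Real.sqrt (d + 1)) / d : ℝ) : ℂ) • 1).PosSemidef ∧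
    (A - (((1 - ((d : ℝ) - 1) * Real.sqrt (d + 1)) / d : ℝ) : ℂ) • 1).trace
      = ((((d : ℝ) - 1) * Real.sqrt (d + 1) : ℝ) : ℂ) ∧
    ((A - (((1 - ((d : ℝ) - 1) * Real.sqrt (d + 1)) / d : ℝ) : ℂ) • 1) *
      (A - (((1 - ((d : ℝ) - 1) * Real.sqrt (d + 1)) / d : ℝ) : ℂ) • 1)).trace
      = (((d : ℝ) ^ 2 - 1 : ℝ) : ℂ) := by
  classical
  set σ : ℝ := ((d : ℝ) - 1) * Real.sqrt (d + 1) with hσ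
  set L : ℝ := (1 - σ) / d with hL
  have hd' : (2 : ℝ) ≤ (d : ℝ) := by exact_mod_cast hd
  have hdne : (d : ℝ) ≠ 0 := by linarith
  have hσsq : σ ^ 2 = ((d : ℝ) - 1) ^ 2 * ((d : ℝ) + 1) := by
    have : Real.sqrt ((d : ℝ) + 1) ^ 2 = (d : ℝ) + 1 := Real.sq_sqrt (by positivity)
    rw [hσ, mul_pow, this]
  -- eigenvalue sums of A
  set ev : Fin d → ℝ := hA.eigenvalues with hev
  have e1 : ∑ i, ev i = 1 := by
    have := (aux_trace_eq_sum_eigs A hA).symm.trans htrA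
    exact_mod_cast (by push_cast at this ⊢; exact this : ((∑ i, ev i : ℝ) : ℂ) = (1 : ℂ))
  have e2 : ∑ i, ev i ^ 2 = (d : ℝ) := by
    have := (aux_trace_sq_eq_sum_sq_eigs A hA).symm.trans htrA2
    exact_mod_cast (by push_cast at this ⊢; exact this :
      ((∑ i, ev i ^ 2 : ℝ) : ℂ) = ((d : ℝ) : ℂ))
  -- B is PSD
  have hpsd : (A - (L : ℂ) • 1).PosSemidef :=
    aux_shift_psd A hA L (fun i => aux_eig_bound hd ev e1 e2 i)
  -- traces of B
  have htr1 : (A - (L : ℂ) • 1).trace = ((σ : ℝ) : ℂ) := by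
    rw [Matrix.trace_sub, Matrix.trace_smul, Matrix.trace_one, htrA]
    rw [smul_eq_mul]
    rw [show ((σ : ℝ) : ℂ) = ((1 - L * d : ℝ) : ℂ) by rw [hL]; field_simp; ring_nf]
    push_cast
    simp [Fintype.card_fin]
  have htrB2 : ((A - (L : ℂ) • 1) * (A - (L : ℂ) • 1)).trace = (((d : ℝ) ^ 2 - 1 : ℝ) : ℂ) := by
    have expand : (A - (L : ℂ) • 1) * (A - (L : ℂ) • 1) =
        A * A - (L : ℂ) • A - (L : ℂ) • A + ((L : ℂ) * (L : ℂ)) • (1 : Matrix (Fin d) (Fin d) ℂ) := by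
      simp only [Matrix.sub_mul, Matrix.mul_sub, Matrix.smul_mul, Matrix.mul_smul,
        Matrix.one_mul, Matrix.mul_one, smul_smul]
      abel_nf
      try module
    rw [expand, Matrix.trace_add, Matrix.trace_sub, Matrix.trace_sub, Matrix.trace_smul,
      Matrix.trace_smul, Matrix.trace_one, htrA, htrA2]
    have harith : (d : ℝ) - 2 * L + (L * L) * d = (d : ℝ) ^ 2 - 1 := by
      rw [hL]
      field_simp
      nlinarith [hσsq]
    have harith' := congrArg (Complex.ofReal) harith
    push_cast at harith'
    simp only [smul_eq_mul, mul_one, Fintype.card_fin]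
    push_cast
    linear_combination harith'
  have hLneg : -((σ - 1) / (d : ℝ)) = L := by rw [hL]; ring
  have hprod : ρ * (A - (L : ℂ) • 1) = 0 := by
    apply aux_mul_eq_zero hρ hpsd
    rw [Matrix.mul_sub, Matrix.trace_sub, Matrix.mul_smul, Matrix.mul_one, Matrix.trace_smul,
      htρ]
    rw [hLneg] at hneg
    simp only [smul_eq_mul, mul_one, Complex.sub_re, Complex.ofReal_re]
    linarith
  exact ⟨hprod, hpsd, htr1, htrB2⟩

end Aux

/-- For any NQPR `Q` in dimension `d ≥ 2`, with `N⁺ = ((d−1)√(d+1) − 1)/d`, the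
set of density matrices `ρ` for which some `j` satisfies `Re tr(ρ Q j) ≤ −N⁺` is finite with at
most `d²` elements. -/
theorem stmt_6 (d : ℕ) (hd : 2 ≤ d)
    (Q : Fin (d ^ 2) → Matrix (Fin d) (Fin d) ℂ)
    (hherm : ∀ j, (Q j).IsHermitian)
    (htr : ∀ j, (Q j).trace = 1)
    (hpair : ∀ j k, (Q j * Q k).trace = if j = k then (d : ℂ) else 0)
    (hsum : ∑ j, Q j = (d : ℂ) • (1 : Matrix (Fin d) (Fin d) ℂ)) :
    {ρ : Matrix (Fin d) (Fin d) ℂ | ρ.PosSemidef ∧ ρ.trace = 1 ∧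
        ∃ j, ((ρ * Q j).trace).re ≤ -((((d : ℝ) - 1) * Real.sqrt (d + 1) - 1) / d)}.Finite ∧
      {ρ : Matrix (Fin d) (Fin d) ℂ | ρ.PosSemidef ∧ ρ.trace = 1 ∧
        ∃ j, ((ρ * Q j).trace).re ≤
          -((((d : ℝ) - 1) * Real.sqrt (d + 1) - 1) / d)}.ncard ≤ d ^ 2 := by
  classical
  set S := {ρ : Matrix (Fin d) (Fin d) ℂ | ρ.PosSemidef ∧ ρ.trace = 1 ∧
      ∃ j, ((ρ * Q j).trace).re ≤ -((((d : ℝ) - 1) * Real.sqrt (d + 1) - 1) / d)} with hS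
  -- uniqueness: at most one state per index j
  have huniq : ∀ (ρ₁ ρ₂ : Matrix (Fin d) (Fin d) ℂ), ρ₁.PosSemidef → ρ₁.trace = 1 →
      ρ₂.PosSemidef → ρ₂.trace = 1 → ∀ j : Fin (d ^ 2),
      ((ρ₁ * Q j).trace).re ≤ -((((d : ℝ) - 1) * Real.sqrt (d + 1) - 1) / d) →
      ((ρ₂ * Q j).trace).re ≤ -((((d : ℝ) - 1) * Real.sqrt (d + 1) - 1) / d) →
      ρ₁ = ρ₂ := by
    intro ρ₁ ρ₂ hρ₁ ht₁ hρ₂ ht₂ j hn₁ hn₂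
    have hQ2 : (Q j * Q j).trace = (d : ℂ) := by
      have := hpair j j
      rwa [if_pos rfl] at this
    obtain ⟨hz₁, hpsd, htrB, htrB2⟩ :=
      aux_key hd (Q j) (hherm j) (htr j) hQ2 ρ₁ hρ₁ ht₁ hn₁
    obtain ⟨hz₂, -, -, -⟩ :=
      aux_key hd (Q j) (hherm j) (htr j) hQ2 ρ₂ hρ₂ ht₂ hn₂
    exact aux_unique hd _ hpsd htrB htrB2 ρ₁ ρ₂ hρ₁ hρ₂ ht₁ ht₂ hz₁ hz₂
  -- injection into Fin (d ^ 2)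
  have hd2pos : 0 < d ^ 2 := by positivity
  set f : Matrix (Fin d) (Fin d) ℂ → Fin (d ^ 2) :=
    fun ρ => if h : ρ ∈ S then h.2.2.choose else ⟨0, hd2pos⟩ with hf
  have hinj : Set.InjOn f S := by
    intro ρ₁ h₁ ρ₂ h₂ hfe
    rw [hf] at hfe
    simp only [dif_pos h₁, dif_pos h₂] at hfe
    have hs₁ := h₁.2.2.choose_spec
    have hs₂ := h₂.2.2.choose_spec
    rw [hfe] at hs₁
    exact huniq ρ₁ ρ₂ h₁.1 h₁.2.1 h₂.1 h₂.2.1 _ hs₁ hs₂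
  have hfin : S.Finite := Set.Finite.of_finite_image (Set.toFinite _) hinj
  refine ⟨hfin, ?_⟩
  have hle : S.ncard ≤ (Set.univ : Set (Fin (d ^ 2))).ncard :=
    Set.ncard_le_ncard_of_injOn f (fun a _ => Set.mem_univ (f a)) hinj Set.finite_univ
  rwa [Set.ncard_univ, Nat.card_eq_fintype_card, Fintype.card_fin] at hle
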